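/- For each j with 1 ≤ j ≤ L there exists a constant C ≥ 0 such that for every k ∈ ℕ there exists φ̂ in the iterated space V^(k) = span{T^k v : v ∈ V^(0)} with ‖φ̂ − φ_j‖ ≤ C (λ_{L+1}/λ_j)^k. (Convergence of the localized standard subspace iteration to the dominant eigenfunctions.) -/

import Mathlib

open scoped RealInnerProductSpace

private lemma hasSum_sq {H : Type*} [NormedAddCommGroup H] [InnerProductSpace ℝ H]
    [CompleteSpace H] (φ : HilbertBasis ℕ ℝ H) (x : H) :
    HasSum (fun i => ⟪x, φ i⟫ ^ 2) (‖x‖ ^ 2) := by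
  have h := φ.hasSum_inner_mul_inner x x
  have : (fun i => ⟪x, φ i⟫ * ⟪φ i, x⟫) = fun i => ⟪x, φ i⟫ ^ 2 := by
    funext i; rw [real_inner_comm (φ i) x, sq]
  rw [this, real_inner_self_eq_norm_sq] at h
  exact h

private lemma step_bound {H : Type*} [NormedAddCommGroup H] [InnerProductSpace ℝ H]
    [CompleteSpace H] (T : H →L[ℝ] H) (hTsa : IsSelfAdjoint T)
    (φ : HilbertBasis ℕ ℝ H) (lam : ℕ → ℝ)
    (heig : ∀ j, T (φ j) = lam j • φ j) (hpos : ∀ j, 0 < lam j) (hmono : Antitone lam)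
    (L : ℕ) (u : H) (hu : ∀ i < L, ⟪u, φ i⟫ = 0) :
    (∀ i < L, ⟪T u, φ i⟫ = 0) ∧ ‖T u‖ ≤ lam L * ‖u‖ := by
  have hsym : ∀ x y : H, ⟪T x, y⟫ = ⟪x, T y⟫ := hTsa.isSymmetric
  have hcoef : ∀ i, ⟪T u, φ i⟫ = lam i * ⟪u, φ i⟫ := by
    intro i
    rw [hsym u (φ i), heig i, real_inner_smul_right]
  have hortho : ∀ i < L, ⟪T u, φ i⟫ = 0 := by
    intro i hi; rw [hcoef i, hu i hi, mul_zero]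
  refine ⟨hortho, ?_⟩
  have h1 := hasSum_sq φ (T u)
  have h2 := hasSum_sq φ u
  have hle : ∀ i, ⟪T u, φ i⟫ ^ 2 ≤ (lam L)^2 * ⟪u, φ i⟫ ^ 2 := by
    intro i
    rcases lt_or_ge i L with hi | hi
    · rw [hortho i hi, hu i hi]; simp
    · rw [hcoef i, mul_pow]
      exact mul_le_mul_of_nonneg_right
        (pow_le_pow_left₀ (le_of_lt (hpos i)) (hmono hi) 2) (sq_nonneg _)
  have hsq : ‖T u‖ ^ 2 ≤ (lam L)^2 * ‖u‖ ^ 2 := hasSum_le hle h1 (h2.mul_left _)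
  have hL : (0:ℝ) ≤ lam L := le_of_lt (hpos L)
  nlinarith [norm_nonneg (T u), norm_nonneg u, mul_nonneg hL (norm_nonneg u)]

theorem stmt_2 {H : Type*} [NormedAddCommGroup H] [InnerProductSpace ℝ H] [CompleteSpace H]
    (T : H →L[ℝ] H) (hTsa : IsSelfAdjoint T) (hTc : IsCompactOperator ⇑T)
    (φ : HilbertBasis ℕ ℝ H) (lam : ℕ → ℝ)
    (heig : ∀ j, T (φ j) = lam j • φ j) (hpos : ∀ j, 0 < lam j) (hmono : Antitone lam)
    (L : ℕ) (V0 : Submodule ℝ H) (hV0dim : Module.finrank ℝ V0 = L)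
    (hfull : ∀ w ∈ Submodule.span ℝ (Set.range fun i : Fin L => (φ i : H)),
      ∃ v ∈ V0, (∑ j ∈ Finset.range L, ⟪v, φ j⟫ • (φ j : H)) = w) :
    ∀ j < L, ∃ C : ℝ, 0 ≤ C ∧ ∀ k : ℕ,
      ∃ φhat ∈ Submodule.map (T ^ k).toLinearMap V0,
        ‖φhat - φ j‖ ≤ C * (lam L / lam j) ^ k := by
  intro j hjL
  -- obtain v from hfull
  obtain ⟨v, hvV0, hv⟩ := hfull (φ j)
    (Submodule.subset_span ⟨⟨j, hjL⟩, rfl⟩)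
  -- coefficients of v
  have hoi : ∀ a b : ℕ, ⟪(φ a : H), φ b⟫ = if a = b then (1:ℝ) else 0 :=
    orthonormal_iff_ite.mp φ.orthonormal
  have hcoefv : ∀ i < L, ⟪v, φ i⟫ = (if i = j then (1:ℝ) else 0) := by
    intro i hiL
    have h := congrArg (fun x => ⟪(φ i : H), x⟫) hv
    simp only [inner_sum, real_inner_smul_right] at h
    rw [Finset.sum_eq_single i (fun b _ hb => by simp [hoi, Ne.symm hb])
      (fun h' => absurd (Finset.mem_range.mpr hiL) h')] at h
    simpa [hoi, φ.orthonormal.1 i] using h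
  set u : H := v - φ j with hu_def
  have huorth : ∀ i < L, ⟪u, φ i⟫ = 0 := by
    intro i hiL
    rw [hu_def, inner_sub_left, hcoefv i hiL, hoi]
    by_cases h : i = j
    · simp [h]
    · simp [h, Ne.symm h]
  -- iterate bound
  have hiter : ∀ k : ℕ, (∀ i < L, ⟪(T^k) u, φ i⟫ = 0) ∧ ‖(T^k) u‖ ≤ lam L ^ k * ‖u‖ := by
    intro k
    induction k with
    | zero => simpa using huorth
    | succ n ih =>
      have hstep := step_bound T hTsa φ lam heig hpos hmono L ((T^n) u) ih.1
      have happ : ∀ x : H, (T^(n+1)) x = T ((T^n) x) := by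
        intro x; rw [pow_succ']; rfl
      constructor
      · intro i hiL; rw [happ]; exact hstep.1 i hiL
      · rw [happ]
        calc ‖T ((T^n) u)‖ ≤ lam L * ‖(T^n) u‖ := hstep.2
          _ ≤ lam L * (lam L ^ n * ‖u‖) :=
            mul_le_mul_of_nonneg_left ih.2 (le_of_lt (hpos L))
          _ = lam L ^ (n+1) * ‖u‖ := by ring
  -- eigen iterate
  have heigk : ∀ k : ℕ, (T^k) (φ j) = (lam j ^ k) • φ j := by
    intro k
    induction k with
    | zero => simp
    | succ n ih =>
      have : (T^(n+1)) (φ j) = T ((T^n) (φ j)) := by rw [pow_succ']; rfl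
      rw [this, ih, map_smul, heig j, smul_smul, pow_succ]
  refine ⟨‖u‖, norm_nonneg u, fun k => ?_⟩
  have hlj : (0:ℝ) < lam j ^ k := pow_pos (hpos j) k
  refine ⟨(T^k) ((lam j ^ k)⁻¹ • v), ⟨(lam j ^ k)⁻¹ • v, V0.smul_mem _ hvV0, rfl⟩, ?_⟩
  have hexp : (T^k) ((lam j ^ k)⁻¹ • v) - φ j = (lam j ^ k)⁻¹ • (T^k) u := by
    rw [hu_def, map_sub, smul_sub, map_smul, heigk k, smul_smul,
      inv_mul_cancel₀ (ne_of_gt hlj), one_smul]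
  rw [hexp, norm_smul, norm_inv, Real.norm_eq_abs, abs_of_pos hlj, div_pow]
  have h1 : (lam j ^ k)⁻¹ * ‖(T^k) u‖ ≤ (lam j ^ k)⁻¹ * (lam L ^ k * ‖u‖) :=
    mul_le_mul_of_nonneg_left (hiter k).2 (le_of_lt (inv_pos.mpr hlj))
  refine h1.trans (le_of_eq ?_)
  field_simp
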